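/- For the symmetric group S_4, d(S_4) = 2 and m(S_4) = 3; in particular m(S_4) = d(S_4) + 1. -/
import Mathlib

open Equiv Subgroup

private abbrev G4 := Equiv.Perm (Fin 4)

def IndepGen {G : Type*} [Group G] (S : Set G) : Prop :=
  Subgroup.closure S = ⊤ ∧ ∀ s ∈ S, Subgroup.closure (S \ {s}) < ⊤

noncomputable def mGen (G : Type*) [Group G] : ℕ :=
  sSup {n | ∃ S : Finset G, IndepGen (S : Set G) ∧ S.card = n}


-- basic subgroup card lemmas
private lemma card_lt_of_lt {G : Type*} [Group G] [Finite G] {H K : Subgroup G} (h : H < K) :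
    Nat.card H < Nat.card K :=
  lt_of_le_of_ne (Nat.le_of_dvd Nat.card_pos (card_dvd_of_le h.le))
    fun e => h.ne (Subgroup.eq_of_le_of_card_ge h.le e.ge)

private lemma indep_nonmem {G : Type*} [Group G] {S : Finset G} (h : IndepGen (S : Set G))
    {s : G} (hs : s ∈ S) : s ∉ Subgroup.closure ((S : Set G) \ {s}) := by
  intro hmem
  have hle : Subgroup.closure (S : Set G) ≤ Subgroup.closure ((S : Set G) \ {s}) := by
    apply (Subgroup.closure_le _).2
    intro t ht
    by_cases h' : t = s
    · subst h'; exact hmem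
    · exact Subgroup.subset_closure ⟨ht, h'⟩
  have : Subgroup.closure ((S : Set G) \ {s}) = ⊤ := top_le_iff.1 (h.1 ▸ hle)
  exact absurd (this ▸ h.2 s hs) (lt_irrefl _)

private lemma notmem_closure {G : Type*} [Group G] {S : Finset G} (h : IndepGen (S : Set G))
    {s : G} (hs : s ∈ S) {T : Set G} (hT : T ⊆ (S : Set G) \ {s}) :
    s ∉ Subgroup.closure T :=
  fun hm => indep_nonmem h hs (Subgroup.closure_mono hT hm)

private lemma indep_ne_one {G : Type*} [Group G] {S : Finset G} (h : IndepGen (S : Set G))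
    {s : G} (hs : s ∈ S) : s ≠ 1 := by
  intro e
  exact indep_nonmem h hs (e ▸ Subgroup.one_mem _)

private lemma bot_lt_closure_singleton {G : Type*} [Group G] {x : G} (hx : x ≠ 1) :
    (⊥ : Subgroup G) < Subgroup.closure {x} := by
  refine bot_lt_iff_ne_bot.2 fun e => hx ?_
  have := Subgroup.subset_closure (Set.mem_singleton x)
  rw [e] at this
  exact this

private lemma closure_lt_insert {G : Type*} [Group G] {T : Set G} {y : G}
    (hy : y ∉ Subgroup.closure T) :
    Subgroup.closure T < Subgroup.closure (insert y T) := by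
  refine (Subgroup.closure_mono (Set.subset_insert y T)).lt_of_ne fun e => hy ?_
  rw [e]
  exact Subgroup.subset_closure (Set.mem_insert y T)

set_option maxHeartbeats 10000000 in
set_option maxRecDepth 10000 in
private theorem noZ2cubed : ∀ a b c : G4, ¬(a*a = 1 ∧ b*b = 1 ∧ c*c = 1 ∧
    a*b = b*a ∧ a*c = c*a ∧ b*c = c*b ∧
    a ≠ 1 ∧ b ≠ 1 ∧ c ≠ 1 ∧ a ≠ b ∧ c ≠ a ∧ c ≠ b ∧ c ≠ a*b) := by decide

set_option synthInstance.maxHeartbeats 2000000 in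
set_option synthInstance.maxSize 2048 in
private theorem arith3 : ∀ n1 < 25, ∀ n2 < 25, ∀ n3 < 25,
    (n1 ∣ n2 ∧ n2 ∣ n3 ∧ n3 ∣ 24 ∧ 1 < n1 ∧ n1 < n2 ∧ n2 < n3 ∧ n3 ≠ 24) →
    ((n3 = 8 ∧ n1 = 2 ∧ n2 = 4) ∨ n3 = 12) := by decide

set_option synthInstance.maxHeartbeats 2000000 in
set_option synthInstance.maxSize 2048 in
private theorem arith4 : ∀ n3 < 25, ∀ n4 < 25,
    ¬((n3 = 8 ∨ n3 = 12) ∧ n3 ∣ n4 ∧ n3 < n4 ∧ n4 ∣ 24 ∧ n4 ≠ 24) := by decide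

private theorem cardG4 : Nat.card G4 = 24 := by
  simp only [Nat.card_eq_fintype_card, Fintype.card_perm, Fintype.card_fin]
  decide

private lemma inv_of_card2 {x : G4} (h : Nat.card (Subgroup.closure ({x} : Set G4)) = 2) :
    x * x = 1 ∧ x ≠ 1 := by
  rw [← zpowers_eq_closure, Nat.card_zpowers] at h
  constructor
  · have := pow_orderOf_eq_one x
    rwa [h, pow_two] at this
  · intro e; rw [e, orderOf_one] at h; omega

private lemma chain_card {S : Finset G4} (h : IndepGen (S : Set G4)) {x y z w : G4}
    (hx : x ∈ S) (hy : y ∈ S) (hz : z ∈ S) (hw : w ∈ S)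
    (hxy : x ≠ y) (hxz : x ≠ z) (hyz : y ≠ z)
    (hxw : x ≠ w) (hyw : y ≠ w) (hzw : z ≠ w) :
    ((Nat.card (Subgroup.closure ({x, y, z} : Set G4)) = 8 ∧
      Nat.card (Subgroup.closure ({x} : Set G4)) = 2 ∧
      Nat.card (Subgroup.closure ({x, y} : Set G4)) = 4) ∨
     Nat.card (Subgroup.closure ({x, y, z} : Set G4)) = 12) := by
  have hy' : y ∉ Subgroup.closure ({x} : Set G4) := by
    refine notmem_closure h hy ?_
    rintro t ht
    rw [Set.mem_singleton_iff] at ht; subst ht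
    exact ⟨Finset.mem_coe.2 hx, by simpa using hxy⟩
  have hz' : z ∉ Subgroup.closure ({x, y} : Set G4) := by
    refine notmem_closure h hz ?_
    intro t ht
    simp only [Set.mem_insert_iff, Set.mem_singleton_iff] at ht
    rcases ht with rfl | rfl
    · exact ⟨Finset.mem_coe.2 hx, by simpa using hxz⟩
    · exact ⟨Finset.mem_coe.2 hy, by simpa using hyz⟩
  have l0 : (⊥ : Subgroup G4) < Subgroup.closure ({x} : Set G4) :=
    bot_lt_closure_singleton (indep_ne_one h hx)
  have l1 : Subgroup.closure ({x} : Set G4) < Subgroup.closure ({x, y} : Set G4) := by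
    rw [Set.pair_comm x y]
    exact closure_lt_insert hy'
  have l2 : Subgroup.closure ({x, y} : Set G4) < Subgroup.closure ({x, y, z} : Set G4) := by
    rw [show ({x, y, z} : Set G4) = insert z {x, y} by ext t; simp; tauto]
    exact closure_lt_insert hz'
  have l3 : Subgroup.closure ({x, y, z} : Set G4) < ⊤ := by
    refine lt_of_le_of_lt (le_trans (Subgroup.closure_mono ?_) le_rfl) (h.2 w (Finset.mem_coe.2 hw))
    intro t ht
    simp only [Set.mem_insert_iff, Set.mem_singleton_iff] at ht
    rcases ht with rfl | rfl | rfl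
    · exact ⟨Finset.mem_coe.2 hx, by simpa using hxw⟩
    · exact ⟨Finset.mem_coe.2 hy, by simpa using hyw⟩
    · exact ⟨Finset.mem_coe.2 hz, by simpa using hzw⟩
  set n1 := Nat.card (Subgroup.closure ({x} : Set G4)) with hn1
  set n2 := Nat.card (Subgroup.closure ({x, y} : Set G4)) with hn2
  set n3 := Nat.card (Subgroup.closure ({x, y, z} : Set G4)) with hn3
  have d12 : n1 ∣ n2 := card_dvd_of_le l1.le
  have d23 : n2 ∣ n3 := card_dvd_of_le l2.le
  have d3 : n3 ∣ 24 := by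
    have := card_dvd_of_le (le_top : Subgroup.closure ({x, y, z} : Set G4) ≤ ⊤)
    rwa [Subgroup.card_top, cardG4] at this
  have lt1 : 1 < n1 := by
    have := card_lt_of_lt l0; rwa [Subgroup.card_bot] at this
  have lt2 : n1 < n2 := card_lt_of_lt l1
  have lt3 : n2 < n3 := card_lt_of_lt l2
  have ne24 : n3 ≠ 24 := by
    have := card_lt_of_lt l3; rw [Subgroup.card_top, cardG4] at this; omega
  have b3 : n3 ≤ 24 := Nat.le_of_dvd (by norm_num) d3
  have := arith3 n1 (by omega) n2 (by omega) n3 (by omega)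
    ⟨d12, d23, d3, lt1, lt2, lt3, ne24⟩
  tauto

private lemma commute_of_card_four {x y : G4} (hx2 : x * x = 1) (hy2 : y * y = 1)
    (hx1 : x ≠ 1) (hy1 : y ≠ 1) (hxy : x ≠ y)
    (h4 : Nat.card (Subgroup.closure ({x, y} : Set G4)) = 4) : x * y = y * x := by
  by_contra hc
  have hxmem : x ∈ Subgroup.closure ({x, y} : Set G4) :=
    Subgroup.subset_closure (Set.mem_insert _ _)
  have hymem : y ∈ Subgroup.closure ({x, y} : Set G4) :=
    Subgroup.subset_closure (Set.mem_insert_of_mem _ rfl)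
  have h1xy : (1 : G4) ≠ x * y := fun e => hxy (by
    have : x * (x * y) = x * 1 := by rw [← e]
    rw [← mul_assoc, hx2, one_mul, mul_one] at this
    exact this.symm)
  have h1yx : (1 : G4) ≠ y * x := fun e => hxy (by
    have : y * (y * x) = y * 1 := by rw [← e]
    rw [← mul_assoc, hy2, one_mul, mul_one] at this
    exact this)
  have hxxy : x ≠ x * y := fun e =>
    hy1 (mul_left_cancel (a := x) (show x * y = x * 1 by rw [mul_one, ← e]))
  have hxyx : x ≠ y * x := fun e =>
    hy1 (mul_right_cancel (b := x) (show y * x = 1 * x by rw [one_mul, ← e]))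
  have hyxy : y ≠ x * y := fun e =>
    hx1 (mul_right_cancel (b := y) (show x * y = 1 * y by rw [one_mul, ← e]))
  have hyyx : y ≠ y * x := fun e =>
    hx1 (mul_left_cancel (a := y) (show y * x = y * 1 by rw [mul_one, ← e]))
  have hF : ({1, x, y, x * y, y * x} : Finset G4).card = 5 := by
    rw [Finset.card_insert_of_notMem (by simp [h1xy, h1yx, hx1.symm, hy1.symm]),
      Finset.card_insert_of_notMem (by simp [hxy, hxxy, hxyx]),
      Finset.card_insert_of_notMem (by simp [hyxy, hyyx]),
      Finset.card_insert_of_notMem (by simp [hc]),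
      Finset.card_singleton]
  have hsub : (({1, x, y, x * y, y * x} : Finset G4) : Set G4) ⊆
      (Subgroup.closure ({x, y} : Set G4) : Set G4) := by
    intro t ht
    simp only [Finset.coe_insert, Finset.coe_singleton, Set.mem_insert_iff,
      Set.mem_singleton_iff] at ht
    rcases ht with rfl | rfl | rfl | rfl | rfl
    · exact Subgroup.one_mem _
    · exact hxmem
    · exact hymem
    · exact Subgroup.mul_mem _ hxmem hymem
    · exact Subgroup.mul_mem _ hymem hxmem
  have : (5 : ℕ) ≤ 4 := by
    calc (5 : ℕ) = ({1, x, y, x * y, y * x} : Finset G4).card := hF.symm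
      _ = (({1, x, y, x * y, y * x} : Finset G4) : Set G4).ncard := by
          rw [Set.ncard_coe_finset]
      _ ≤ ((Subgroup.closure ({x, y} : Set G4) : Set G4)).ncard :=
          Set.ncard_le_ncard hsub (Set.toFinite _)
      _ = Nat.card (Subgroup.closure ({x, y} : Set G4)) := by
          rw [← Nat.card_coe_set_eq]; rfl
      _ = 4 := h4
  omega

private lemma case8 {S : Finset G4} (h : IndepGen (S : Set G4)) {x y z w : G4}
    (hx : x ∈ S) (hy : y ∈ S) (hz : z ∈ S) (hw : w ∈ S)
    (hxy : x ≠ y) (hxz : x ≠ z) (hyz : y ≠ z) (hxw : x ≠ w) (hyw : y ≠ w) (hzw : z ≠ w)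
    (h8 : Nat.card (Subgroup.closure ({x, y, z} : Set G4)) = 8) : False := by
  have r1 := chain_card h hx hy hz hw hxy hxz hyz hxw hyw hzw
  rcases r1 with ⟨-, cx2, cxy4⟩ | r1
  swap
  · omega
  have hs2 : ({x, z, y} : Set G4) = {x, y, z} := by ext t; simp; tauto
  have r2 := chain_card h hx hz hy hw hxz hxy hyz.symm hxw hzw hyw
  rw [hs2] at r2
  rcases r2 with ⟨-, -, cxz4⟩ | r2
  swap
  · omega
  have hs3 : ({y, z, x} : Set G4) = {x, y, z} := by ext t; simp; tauto
  have r3 := chain_card h hy hz hx hw hyz hxy.symm hxz.symm hyw hzw hxw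
  rw [hs3] at r3
  rcases r3 with ⟨-, cy2, cyz4⟩ | r3
  swap
  · omega
  have hs4 : ({z, x, y} : Set G4) = {x, y, z} := by ext t; simp; tauto
  have r4 := chain_card h hz hx hy hw hxz.symm hyz.symm hxy hzw hxw hyw
  rw [hs4] at r4
  rcases r4 with ⟨-, cz2, -⟩ | r4
  swap
  · omega
  obtain ⟨hx2, hx1⟩ := inv_of_card2 cx2
  obtain ⟨hy2, hy1⟩ := inv_of_card2 cy2
  obtain ⟨hz2, hz1⟩ := inv_of_card2 cz2
  have cxy := commute_of_card_four hx2 hy2 hx1 hy1 hxy cxy4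
  have cxz := commute_of_card_four hx2 hz2 hx1 hz1 hxz cxz4
  have cyz := commute_of_card_four hy2 hz2 hy1 hz1 hyz cyz4
  have hz' : z ∉ Subgroup.closure ({x, y} : Set G4) := by
    refine notmem_closure h hz ?_
    intro t ht
    simp only [Set.mem_insert_iff, Set.mem_singleton_iff] at ht
    rcases ht with rfl | rfl
    · exact ⟨Finset.mem_coe.2 hx, by simpa using hxz⟩
    · exact ⟨Finset.mem_coe.2 hy, by simpa using hyz⟩
  have hzxy : z ≠ x * y := fun e => hz' (e ▸ Subgroup.mul_mem _
    (Subgroup.subset_closure (Set.mem_insert _ _))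
    (Subgroup.subset_closure (Set.mem_insert_of_mem _ rfl)))
  exact noZ2cubed x y z
    ⟨hx2, hy2, hz2, cxy, cxz, cyz, hx1, hy1, hz1, hxy, hxz.symm, hyz.symm, hzxy⟩

private lemma order12 {H : Subgroup G4} (h12 : Nat.card H = 12) :
    H = alternatingGroup (Fin 4) := by
  have hidx : H.index = 2 := by
    have := Subgroup.card_mul_index (H := H)
    rw [h12, cardG4] at this
    omega
  have h3 : ∀ g : G4, Equiv.Perm.IsThreeCycle g → g ∈ H := by
    intro g hg
    have ho : orderOf g = 3 := hg.orderOf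
    have h1 : g ^ 3 = 1 := ho ▸ pow_orderOf_eq_one g
    have he : (g ^ 2) ^ 2 = g := by
      calc (g ^ 2) ^ 2 = g ^ (2 * 2) := (pow_mul g 2 2).symm
        _ = g ^ (3 + 1) := by norm_num
        _ = g ^ 3 * g ^ 1 := pow_add g 3 1
        _ = g := by rw [h1, one_mul, pow_one]
    exact he ▸ Subgroup.sq_mem_of_index_two hidx (g ^ 2)
  have hle : alternatingGroup (Fin 4) ≤ H := by
    rw [← Equiv.Perm.closure_three_cycles_eq_alternating]
    exact (Subgroup.closure_le _).2 fun g hg => h3 g hg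
  have hcard : Nat.card (alternatingGroup (Fin 4)) = 12 := by
    have h2 := two_mul_card_alternatingGroup (α := Fin 4)
    rw [Fintype.card_perm, Fintype.card_fin] at h2
    rw [Nat.card_eq_fintype_card]
    have : Nat.factorial 4 = 24 := by decide
    omega
  exact (Subgroup.eq_of_le_of_card_ge hle (by rw [h12, hcard])).symm

private lemma indep_card_le3 (S : Finset G4) (h : IndepGen (S : Set G4)) : S.card ≤ 3 := by
  by_contra hbig
  push_neg at hbig
  obtain ⟨a, ha⟩ := Finset.card_pos.mp (show 0 < S.card by omega)
  have h1 : 0 < (S.erase a).card := by rw [Finset.card_erase_of_mem ha]; omega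
  obtain ⟨b, hb'⟩ := Finset.card_pos.mp h1
  obtain ⟨hba, hb⟩ := Finset.mem_erase.mp hb'
  have h2 : 0 < ((S.erase a).erase b).card := by
    rw [Finset.card_erase_of_mem hb', Finset.card_erase_of_mem ha]; omega
  obtain ⟨c, hc'⟩ := Finset.card_pos.mp h2
  obtain ⟨hcb, hc''⟩ := Finset.mem_erase.mp hc'
  obtain ⟨hca, hc⟩ := Finset.mem_erase.mp hc''
  have h3' : 0 < (((S.erase a).erase b).erase c).card := by
    rw [Finset.card_erase_of_mem hc', Finset.card_erase_of_mem hb',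
      Finset.card_erase_of_mem ha]
    omega
  obtain ⟨d, hd'⟩ := Finset.card_pos.mp h3'
  obtain ⟨hdc, hd''⟩ := Finset.mem_erase.mp hd'
  obtain ⟨hdb, hd'''⟩ := Finset.mem_erase.mp hd''
  obtain ⟨hda, hd⟩ := Finset.mem_erase.mp hd'''
  have hab : a ≠ b := hba.symm
  have hac : a ≠ c := hca.symm
  have had : a ≠ d := hda.symm
  have hbc : b ≠ c := hcb.symm
  have hbd : b ≠ d := hdb.symm
  have hcd : c ≠ d := hdc.symm
  by_cases h5 : 5 ≤ S.card
  · -- five or more elements: impossible by the doubling chain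
    have h4' : 0 < ((((S.erase a).erase b).erase c).erase d).card := by
      rw [Finset.card_erase_of_mem hd', Finset.card_erase_of_mem hc',
        Finset.card_erase_of_mem hb', Finset.card_erase_of_mem ha]
      omega
    obtain ⟨e, he'⟩ := Finset.card_pos.mp h4'
    obtain ⟨hed, he''⟩ := Finset.mem_erase.mp he'
    obtain ⟨hec, he'''⟩ := Finset.mem_erase.mp he''
    obtain ⟨heb, he''''⟩ := Finset.mem_erase.mp he'''
    obtain ⟨hea, he⟩ := Finset.mem_erase.mp he''''
    have hd4 : d ∉ Subgroup.closure ({a, b, c} : Set G4) := by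
      refine notmem_closure h hd ?_
      intro t ht
      simp only [Set.mem_insert_iff, Set.mem_singleton_iff] at ht
      rcases ht with rfl | rfl | rfl
      · exact ⟨Finset.mem_coe.2 ha, by simpa using had⟩
      · exact ⟨Finset.mem_coe.2 hb, by simpa using hbd⟩
      · exact ⟨Finset.mem_coe.2 hc, by simpa using hcd⟩
    have l3 : Subgroup.closure ({a, b, c} : Set G4) <
        Subgroup.closure ({a, b, c, d} : Set G4) := by
      rw [show ({a, b, c, d} : Set G4) = insert d {a, b, c} by ext t; simp; tauto]
      exact closure_lt_insert hd4
    have l4 : Subgroup.closure ({a, b, c, d} : Set G4) < ⊤ := by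
      refine lt_of_le_of_lt (Subgroup.closure_mono ?_) (h.2 e (Finset.mem_coe.2 he))
      intro t ht
      simp only [Set.mem_insert_iff, Set.mem_singleton_iff] at ht
      rcases ht with rfl | rfl | rfl | rfl
      · exact ⟨Finset.mem_coe.2 ha, by simpa using hea.symm⟩
      · exact ⟨Finset.mem_coe.2 hb, by simpa using heb.symm⟩
      · exact ⟨Finset.mem_coe.2 hc, by simpa using hec.symm⟩
      · exact ⟨Finset.mem_coe.2 hd, by simpa using hed.symm⟩
    set n3 := Nat.card (Subgroup.closure ({a, b, c} : Set G4)) with hn3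
    set n4 := Nat.card (Subgroup.closure ({a, b, c, d} : Set G4)) with hn4
    have hor : n3 = 8 ∨ n3 = 12 := by
      rcases chain_card h ha hb hc hd hab hac hbc had hbd hcd with ⟨h8, -, -⟩ | h12
      · exact Or.inl h8
      · exact Or.inr h12
    have d34 : n3 ∣ n4 := card_dvd_of_le l3.le
    have lt34 : n3 < n4 := card_lt_of_lt l3
    have d4 : n4 ∣ 24 := by
      have := card_dvd_of_le (le_top : Subgroup.closure ({a, b, c, d} : Set G4) ≤ ⊤)
      rwa [Subgroup.card_top, cardG4] at this
    have ne24 : n4 ≠ 24 := by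
      have := card_lt_of_lt l4
      rw [Subgroup.card_top, cardG4] at this
      omega
    have b4 : n4 ≤ 24 := Nat.le_of_dvd (by norm_num) d4
    exact arith4 n3 (by omega) n4 (by omega) ⟨hor, d34, lt34, d4, ne24⟩
  · -- exactly four elements
    have hScard : S.card = 4 := by omega
    have hsub : ({a, b, c, d} : Finset G4) ⊆ S := by
      intro t ht
      simp only [Finset.mem_insert, Finset.mem_singleton] at ht
      rcases ht with rfl | rfl | rfl | rfl
      exacts [ha, hb, hc, hd]
    have hcard4 : ({a, b, c, d} : Finset G4).card = 4 := by
      rw [Finset.card_insert_of_notMem (by simp [hab, hac, had]),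
        Finset.card_insert_of_notMem (by simp [hbc, hbd]),
        Finset.card_insert_of_notMem (by simp [hcd]),
        Finset.card_singleton]
    have hSeq : ({a, b, c, d} : Finset G4) = S :=
      Finset.eq_of_subset_of_card_le hsub (by omega)
    rcases chain_card h ha hb hc hd hab hac hbc had hbd hcd with ⟨h8, -, -⟩ | c12abc
    · exact case8 h ha hb hc hd hab hac hbc had hbd hcd h8
    rcases chain_card h ha hb hd hc hab had hbd hac hbc hdc with ⟨h8', -, -⟩ | c12abd
    · exact case8 h ha hb hd hc hab had hbd hac hbc hdc h8'
    have hA1 := order12 c12abc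
    have hA2 := order12 c12abd
    have haA : a ∈ alternatingGroup (Fin 4) :=
      hA1 ▸ Subgroup.subset_closure (Set.mem_insert _ _)
    have hbA : b ∈ alternatingGroup (Fin 4) :=
      hA1 ▸ Subgroup.subset_closure (Set.mem_insert_of_mem _ (Set.mem_insert _ _))
    have hcA : c ∈ alternatingGroup (Fin 4) :=
      hA1 ▸ Subgroup.subset_closure
        (Set.mem_insert_of_mem _ (Set.mem_insert_of_mem _ rfl))
    have hdA : d ∈ alternatingGroup (Fin 4) :=
      hA2 ▸ Subgroup.subset_closure
        (Set.mem_insert_of_mem _ (Set.mem_insert_of_mem _ rfl))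
    have hle : Subgroup.closure (S : Set G4) ≤ alternatingGroup (Fin 4) := by
      apply (Subgroup.closure_le _).2
      intro t ht
      rw [← hSeq] at ht
      simp only [Finset.coe_insert, Finset.coe_singleton, Set.mem_insert_iff,
        Set.mem_singleton_iff] at ht
      rcases ht with rfl | rfl | rfl | rfl
      exacts [haA, hbA, hcA, hdA]
    rw [h.1, top_le_iff] at hle
    have hsw : Equiv.swap (0 : Fin 4) 1 ∈ alternatingGroup (Fin 4) := by
      rw [hle]; exact Subgroup.mem_top _
    rw [Equiv.Perm.mem_alternatingGroup, Equiv.Perm.sign_swap (by decide)] at hsw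
    exact absurd hsw (by decide)

private lemma swap_eq : Equiv.swap (0 : Fin 4) ((finRotate 4) 0) = Equiv.swap (0 : Fin 4) 1 := by
  have : (finRotate 4) 0 = 1 := by decide
  rw [this]

private lemma gen2_top :
    Subgroup.closure ({finRotate 4, Equiv.swap (0 : Fin 4) 1} : Set G4) = ⊤ := by
  have hc := Equiv.Perm.closure_cycle_adjacent_swap (σ := finRotate 4)
    (isCycle_finRotate (n := 2)) (support_finRotate (n := 2)) 0
  rwa [swap_eq] at hc

private lemma rank_eq_two : Group.rank G4 = 2 := by
  have hub : Group.rank G4 ≤ 2 := by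
    have h := Group.rank_le (G := G4)
      (S := {finRotate 4, Equiv.swap (0 : Fin 4) 1}) (by
        rw [show ((({finRotate 4, Equiv.swap (0 : Fin 4) 1} : Finset G4)) : Set G4)
            = ({finRotate 4, Equiv.swap (0 : Fin 4) 1} : Set G4) by simp]
        exact gen2_top)
    calc Group.rank G4 ≤ ({finRotate 4, Equiv.swap (0 : Fin 4) 1} : Finset G4).card := h
      _ ≤ 2 := (Finset.card_insert_le _ _).trans (by simp)
  have hlb : ¬ Group.rank G4 ≤ 1 := by
    intro hle
    obtain ⟨S, hScard, hStop⟩ := Group.rank_spec G4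
    have hS1 : S.card = 0 ∨ S.card = 1 := by omega
    rcases hS1 with hS | hS
    · rw [Finset.card_eq_zero] at hS
      subst hS
      rw [Finset.coe_empty, Subgroup.closure_empty] at hStop
      have : Equiv.swap (0 : Fin 4) 1 ∈ (⊥ : Subgroup G4) := hStop ▸ Subgroup.mem_top _
      rw [Subgroup.mem_bot] at this
      exact absurd this (by decide)
    · rw [Finset.card_eq_one] at hS
      obtain ⟨g, rfl⟩ := hS
      rw [Finset.coe_singleton, ← Subgroup.zpowers_eq_closure] at hStop
      have h1 : Equiv.swap (0 : Fin 4) 1 ∈ Subgroup.zpowers g := hStop ▸ Subgroup.mem_top _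
      have h2 : Equiv.swap (1 : Fin 4) 2 ∈ Subgroup.zpowers g := hStop ▸ Subgroup.mem_top _
      obtain ⟨m, hm⟩ := Subgroup.mem_zpowers_iff.mp h1
      obtain ⟨n, hn⟩ := Subgroup.mem_zpowers_iff.mp h2
      have hcomm : Equiv.swap (0 : Fin 4) 1 * Equiv.swap (1 : Fin 4) 2
          = Equiv.swap (1 : Fin 4) 2 * Equiv.swap (0 : Fin 4) 1 := by
        rw [← hm, ← hn, ← zpow_add, ← zpow_add, add_comm]
      exact absurd hcomm (by decide)
  omega

private def t1 : G4 := Equiv.swap 0 1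
private def t2 : G4 := Equiv.swap 1 2
private def t3 : G4 := Equiv.swap 2 3

private lemma gen3_top : Subgroup.closure ({t1, t2, t3} : Set G4) = ⊤ := by
  rw [eq_top_iff, ← gen2_top]
  apply (Subgroup.closure_le _).2
  intro t ht
  simp only [Set.mem_insert_iff, Set.mem_singleton_iff] at ht
  have h1 : t1 ∈ Subgroup.closure ({t1, t2, t3} : Set G4) :=
    Subgroup.subset_closure (Set.mem_insert _ _)
  have h2 : t2 ∈ Subgroup.closure ({t1, t2, t3} : Set G4) :=
    Subgroup.subset_closure (Set.mem_insert_of_mem _ (Set.mem_insert _ _))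
  have h3 : t3 ∈ Subgroup.closure ({t1, t2, t3} : Set G4) :=
    Subgroup.subset_closure (Set.mem_insert_of_mem _ (Set.mem_insert_of_mem _ rfl))
  rcases ht with rfl | rfl
  · have he : (finRotate 4 : G4) = t1 * t2 * t3 := by decide
    simp only [SetLike.mem_coe]
    rw [he]
    exact Subgroup.mul_mem _ (Subgroup.mul_mem _ h1 h2) h3
  · exact SetLike.mem_coe.2 h1

private lemma proper_23 : Subgroup.closure ({t2, t3} : Set G4) < ⊤ := by
  have hle : Subgroup.closure ({t2, t3} : Set G4) ≤ MulAction.stabilizer G4 (0 : Fin 4) := by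
    apply (Subgroup.closure_le _).2
    intro t ht
    simp only [Set.mem_insert_iff, Set.mem_singleton_iff] at ht
    rcases ht with rfl | rfl
    · exact SetLike.mem_coe.2 (MulAction.mem_stabilizer_iff.2 (by decide))
    · exact SetLike.mem_coe.2 (MulAction.mem_stabilizer_iff.2 (by decide))
  refine lt_of_le_of_lt hle (lt_top_iff_ne_top.2 fun e => ?_)
  have h0 : t1 ∈ MulAction.stabilizer G4 (0 : Fin 4) := e.symm ▸ Subgroup.mem_top t1
  rw [MulAction.mem_stabilizer_iff] at h0
  exact absurd h0 (by decide)

private lemma proper_12 : Subgroup.closure ({t1, t2} : Set G4) < ⊤ := by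
  have hle : Subgroup.closure ({t1, t2} : Set G4) ≤ MulAction.stabilizer G4 (3 : Fin 4) := by
    apply (Subgroup.closure_le _).2
    intro t ht
    simp only [Set.mem_insert_iff, Set.mem_singleton_iff] at ht
    rcases ht with rfl | rfl
    · exact SetLike.mem_coe.2 (MulAction.mem_stabilizer_iff.2 (by decide))
    · exact SetLike.mem_coe.2 (MulAction.mem_stabilizer_iff.2 (by decide))
  refine lt_of_le_of_lt hle (lt_top_iff_ne_top.2 fun e => ?_)
  have h0 : t3 ∈ MulAction.stabilizer G4 (3 : Fin 4) := e.symm ▸ Subgroup.mem_top t3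
  rw [MulAction.mem_stabilizer_iff] at h0
  exact absurd h0 (by decide)

private lemma proper_13 : Subgroup.closure ({t1, t3} : Set G4) < ⊤ := by
  have hle : Subgroup.closure ({t1, t3} : Set G4) ≤ Subgroup.centralizer {t1 * t3} := by
    apply (Subgroup.closure_le _).2
    intro t ht
    simp only [Set.mem_insert_iff, Set.mem_singleton_iff] at ht
    rcases ht with rfl | rfl
    · exact SetLike.mem_coe.2 (Subgroup.mem_centralizer_singleton_iff.2 (by decide))
    · exact SetLike.mem_coe.2 (Subgroup.mem_centralizer_singleton_iff.2 (by decide))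
  refine lt_of_le_of_lt hle (lt_top_iff_ne_top.2 fun e => ?_)
  have h0 : t2 ∈ Subgroup.centralizer {t1 * t3} := e.symm ▸ Subgroup.mem_top t2
  rw [Subgroup.mem_centralizer_singleton_iff] at h0
  exact absurd h0 (by decide)

private lemma hcard3 : ({t1, t2, t3} : Finset G4).card = 3 := by decide

private lemma indep3 : IndepGen ((({t1, t2, t3} : Finset G4)) : Set G4) := by
  have hcoe : ((({t1, t2, t3} : Finset G4)) : Set G4) = ({t1, t2, t3} : Set G4) := by simp
  constructor
  · rw [hcoe]; exact gen3_top
  · intro s hs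
    rw [hcoe] at hs ⊢
    simp only [Set.mem_insert_iff, Set.mem_singleton_iff] at hs
    rcases hs with rfl | rfl | rfl
    · refine lt_of_le_of_lt (Subgroup.closure_mono ?_) proper_23
      rintro t ⟨ht, hne⟩
      simp only [Set.mem_insert_iff, Set.mem_singleton_iff] at ht
      simp only [Set.mem_singleton_iff] at hne
      rcases ht with rfl | rfl | rfl
      · exact absurd rfl hne
      · exact Set.mem_insert _ _
      · exact Set.mem_insert_of_mem _ rfl
    · refine lt_of_le_of_lt (Subgroup.closure_mono ?_) proper_13
      rintro t ⟨ht, hne⟩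
      simp only [Set.mem_insert_iff, Set.mem_singleton_iff] at ht
      simp only [Set.mem_singleton_iff] at hne
      rcases ht with rfl | rfl | rfl
      · exact Set.mem_insert _ _
      · exact absurd rfl hne
      · exact Set.mem_insert_of_mem _ rfl
    · refine lt_of_le_of_lt (Subgroup.closure_mono ?_) proper_12
      rintro t ⟨ht, hne⟩
      simp only [Set.mem_insert_iff, Set.mem_singleton_iff] at ht
      simp only [Set.mem_singleton_iff] at hne
      rcases ht with rfl | rfl | rfl
      · exact Set.mem_insert _ _
      · exact Set.mem_insert_of_mem _ rfl
      · exact absurd rfl hne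

theorem sym4_d_and_m :
    Group.rank (Equiv.Perm (Fin 4)) = 2 ∧ mGen (Equiv.Perm (Fin 4)) = 3 := by
  refine ⟨rank_eq_two, ?_⟩
  unfold mGen
  have hmem3 : (3 : ℕ) ∈ {n | ∃ S : Finset G4, IndepGen (S : Set G4) ∧ S.card = n} :=
    ⟨{t1, t2, t3}, indep3, hcard3⟩
  have hub : ∀ n ∈ {n | ∃ S : Finset G4, IndepGen (S : Set G4) ∧ S.card = n}, n ≤ 3 := by
    rintro n ⟨S, hI, rfl⟩
    exact indep_card_le3 S hI
  exact le_antisymm (csSup_le ⟨3, hmem3⟩ hub) (le_csSup ⟨3, hub⟩ hmem3)
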